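/- In the Poisson torus ℂ[c₀^{±1}, d₀^{±1}, …, c_n^{±1}, d_n^{±1}] with bracket {c_k, d_k} = 2 c_k d_k, {c_k, d_{k+1}} = −2 c_k d_{k+1}, {c_k, c_{k+1}} = −2 c_k c_{k+1} (indices mod n+1), all other generator brackets zero, the elements P = Π_{k} d_k and R = Π_k c_k d_k^{-1} are Casimirs: they Poisson-commute with all generators. -/

import Mathlib

/-!
STATEMENT 17: In the Poisson torus ℂ[c₀^{±1},…,c_n^{±1},d₀^{±1},…,d_n^{±1}] with
bracket {c_k,d_k} = 2c_kd_k, {c_k,d_{k+1}} = −2c_kd_{k+1}, {c_k,c_{k+1}} = −2c_kc_{k+1}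
(indices mod n+1), all other generator brackets zero, the elements P = Π_k d_k and
R = Π_k c_k d_k⁻¹ are Casimirs.
-/

/-- The Laurent polynomial algebra ℂ[c₀^{±1},…,c_n^{±1},d₀^{±1},…,d_n^{±1}]. -/
abbrev TodaTorusC (n : ℕ) : Type := AddMonoidAlgebra ℂ ((Fin (n + 1) ⊕ Fin (n + 1)) → ℤ)

/-- The generator c_k. -/
noncomputable def cgen {n : ℕ} (k : Fin (n + 1)) : TodaTorusC n :=
  AddMonoidAlgebra.single (Pi.single (Sum.inl k) (1 : ℤ)) (1 : ℂ)

/-- The generator d_k. -/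
noncomputable def dgen {n : ℕ} (k : Fin (n + 1)) : TodaTorusC n :=
  AddMonoidAlgebra.single (Pi.single (Sum.inr k) (1 : ℤ)) (1 : ℂ)

/-- The inverse d_k⁻¹ of the generator d_k. -/
noncomputable def dginv {n : ℕ} (k : Fin (n + 1)) : TodaTorusC n :=
  AddMonoidAlgebra.single (-Pi.single (Sum.inr k) (1 : ℤ)) (1 : ℂ)

open Finset

section Aux
variable {n : ℕ} (br : TodaTorusC n →ₗ[ℂ] TodaTorusC n →ₗ[ℂ] TodaTorusC n)

lemma aux_br_one (leibniz : ∀ f g h, br f (g * h) = g * br f h + h * br f g)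
    (f : TodaTorusC n) : br f 1 = 0 := by
  have h := leibniz f 1 1
  simp only [one_mul, mul_one] at h
  exact add_eq_left.mp h.symm

lemma aux_br_prod (leibniz : ∀ f g h, br f (g * h) = g * br f h + h * br f g)
    (f : TodaTorusC n) {ι : Type*} [DecidableEq ι] (s : Finset ι) (g : ι → TodaTorusC n) :
    br f (∏ i ∈ s, g i) = ∑ i ∈ s, (∏ j ∈ s.erase i, g j) * br f (g i) := by
  induction s using Finset.induction_on with
  | empty => simp [aux_br_one br leibniz f]
  | @insert a s ha ih =>
    rw [Finset.prod_insert ha, leibniz, ih, Finset.sum_insert ha, Finset.erase_insert ha,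
      Finset.mul_sum, add_comm]
    congr 1
    refine Finset.sum_congr rfl fun i hi => ?_
    have hia : i ≠ a := fun h => ha (h ▸ hi)
    rw [Finset.erase_insert_of_ne hia.symm, Finset.prod_insert (fun h => ha (Finset.mem_of_mem_erase h)),
      mul_assoc]

/-- sum over univ with only two nonzero terms -/
lemma aux_sum_two (t : Fin (n+1) → TodaTorusC n) (i j : Fin (n+1)) (hij : i ≠ j)
    (h0 : ∀ k, k ≠ i → k ≠ j → t k = 0) : ∑ k, t k = t i + t j := by
  rw [← Finset.sum_pair hij]
  refine (Finset.sum_subset (Finset.subset_univ _) fun x _ hx => ?_).symm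
  simp only [Finset.mem_insert, Finset.mem_singleton, not_or] at hx
  exact h0 x hx.1 hx.2

lemma aux_smul2 (x : TodaTorusC n) : (-(2 : ℂ)) • x = -(2 * x) := by
  rw [neg_smul]
  congr 1
  rw [show (2:ℂ) = 1 + 1 by norm_num, add_smul, one_smul, two_mul]

lemma aux_dd_one (k : Fin (n+1)) : dgen k * dginv k = 1 := by
  rw [dgen, dginv, AddMonoidAlgebra.single_mul_single, mul_one, add_neg_cancel,
    AddMonoidAlgebra.one_def]

lemma aux_cc_ne (k l : Fin (n+1)) : cgen k * cgen l ≠ 0 := by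
  simp only [cgen]
  rw [AddMonoidAlgebra.single_mul_single, mul_one]
  exact fun h => one_ne_zero (AddMonoidAlgebra.single_eq_zero.mp h)

end Aux

theorem toda_torus_casimirs (n : ℕ) (hn : 1 ≤ n)
    (br : TodaTorusC n →ₗ[ℂ] TodaTorusC n →ₗ[ℂ] TodaTorusC n)
    (skew : ∀ f g, br f g = -br g f)
    (leibniz : ∀ f g h, br f (g * h) = g * br f h + h * br f g)
    (hcd : ∀ k, br (cgen k) (dgen k) = 2 * (cgen k * dgen k))
    (hcd' : ∀ k, br (cgen k) (dgen (k + 1)) = -(2 : ℂ) • (cgen k * dgen (k + 1)))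
    (hcc : ∀ k, br (cgen k) (cgen (k + 1)) = -(2 : ℂ) • (cgen k * cgen (k + 1)))
    -- all other brackets of generators vanish:
    (hcd0 : ∀ k l, l ≠ k → l ≠ k + 1 → br (cgen k) (dgen l) = 0)
    (hcc0 : ∀ k l, l ≠ k + 1 → k ≠ l + 1 → br (cgen k) (cgen l) = 0)
    (hdd0 : ∀ k l, br (dgen k) (dgen l) = 0) :
    -- P = Π_k d_k and R = Π_k c_k d_k⁻¹ Poisson-commute with all generators:
    let P : TodaTorusC n := ∏ k, dgen k
    let R : TodaTorusC n := ∏ k, (cgen k * dginv k)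
    ∀ k : Fin (n + 1),
      br P (cgen k) = 0 ∧ br P (dgen k) = 0 ∧
      br R (cgen k) = 0 ∧ br R (dgen k) = 0 := by
  intro P R k
  -- basic Fin facts
  have h10 : (1 : Fin (n+1)) ≠ 0 := by
    intro h
    have h2 : ((1 : Fin (n+1)) : ℕ) = 0 := by rw [h]; rfl
    rw [Fin.val_one'] at h2
    rw [Nat.mod_eq_of_lt (by omega : 1 < n+1)] at h2
    omega
  have hne1 : ∀ l : Fin (n+1), l ≠ l + 1 := by
    intro l h
    apply h10
    have := h.symm
    nth_rewrite 2 [show l = l + 0 from (add_zero l).symm] at this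
    exact add_left_cancel this
  have hsub1 : ∀ l : Fin (n+1), l - 1 + 1 = l := fun l => sub_add_cancel l 1
  have hnesub : ∀ l : Fin (n+1), l ≠ l - 1 := by
    intro l h
    apply hne1 (l - 1)
    nth_rewrite 1 [← h]
    exact (hsub1 l).symm
  -- P computations
  have hPd : ∀ l, br (dgen l) P = 0 := by
    intro l
    rw [show P = ∏ k, dgen k from rfl, aux_br_prod br leibniz]
    exact Finset.sum_eq_zero fun i _ => by rw [hdd0, mul_zero]
  have hPc : ∀ l : Fin (n+1), br (cgen l) P = 0 := by
    intro l
    rw [show P = ∏ k, dgen k from rfl, aux_br_prod br leibniz,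
      aux_sum_two _ l (l+1) (hne1 l) ?_]
    · have e1 : (∏ j ∈ univ.erase l, dgen j) * dgen l = P :=
        Finset.prod_erase_mul univ _ (mem_univ l)
      have e2 : (∏ j ∈ univ.erase (l+1), dgen j) * dgen (l+1) = P :=
        Finset.prod_erase_mul univ _ (mem_univ (l+1))
      rw [hcd l, hcd' l, aux_smul2]
      linear_combination (2 * cgen l) * e1 - (2 * cgen l) * e2
    · intro m hm1 hm2
      rw [hcd0 l m hm1 hm2, mul_zero]
  -- C := ∏ c_k
  set C : TodaTorusC n := ∏ k, cgen k with hC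
  have hCd : ∀ l : Fin (n+1), br (dgen l) C = 0 := by
    intro l
    rw [hC, aux_br_prod br leibniz, aux_sum_two _ l (l-1) (hnesub l) ?_]
    · have e1 : (∏ j ∈ univ.erase l, cgen j) * cgen l = C :=
        Finset.prod_erase_mul univ _ (mem_univ l)
      have e2 : (∏ j ∈ univ.erase (l-1), cgen j) * cgen (l-1) = C :=
        Finset.prod_erase_mul univ _ (mem_univ (l-1))
      have b1 : br (dgen l) (cgen l) = -(2 * (cgen l * dgen l)) := by
        rw [skew, hcd l]
      have b2 : br (dgen l) (cgen (l-1)) = 2 * (cgen (l-1) * dgen l) := by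
        rw [skew]
        have := hcd' (l - 1)
        rw [hsub1 l] at this
        rw [this, aux_smul2]
        ring
      rw [b1, b2]
      linear_combination -(2 * dgen l) * e1 + (2 * dgen l) * e2
    · intro m hm1 hm2
      have : br (cgen m) (dgen l) = 0 := by
        refine hcd0 m l (fun h => hm1 h.symm) fun h => hm2 ?_
        rw [h]
        exact ((add_sub_cancel_right m 1)).symm
      rw [skew, this, neg_zero, mul_zero]
  -- the n = 1 (i.e. 1 + 1 = 0 in Fin (n+1)) degenerate case is contradictory
  by_cases h2 : (1 + 1 : Fin (n+1)) = 0
  · exfalso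
    have key : ∀ l : Fin (n+1), l + 1 + 1 = l := by
      intro l
      rw [add_assoc, h2, add_zero]
    have e1 := hcc (0 : Fin (n+1))
    have e2 := hcc (0 + 1 : Fin (n+1))
    rw [key 0] at e2
    rw [skew] at e1
    rw [e2] at e1
    rw [aux_smul2, aux_smul2] at e1
    have hx : cgen (0:Fin (n+1)) * cgen (0+1) = cgen (0+1) * cgen 0 := mul_comm _ _
    have h4s : (4 : ℂ) • (cgen (0+1) * cgen (0:Fin (n+1))) = 0 := by
      rw [show (4:ℂ) = 1+1+1+1 by norm_num, add_smul, add_smul, add_smul, one_smul]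
      linear_combination e1 - (2 : TodaTorusC n) * hx
    have h4 : cgen (0+1) * cgen (0:Fin (n+1)) = 0 :=
      (smul_eq_zero.mp h4s).resolve_left (by norm_num)
    exact aux_cc_ne _ _ h4
  · -- main case: l+1 ≠ l-1
    have hne2 : ∀ l : Fin (n+1), l + 1 ≠ l - 1 := by
      intro l h
      apply h2
      have : l + 1 + 1 = l := by rw [h, hsub1]
      rw [add_assoc] at this
      nth_rewrite 2 [show l = l + 0 from (add_zero l).symm] at this
      exact add_left_cancel this
    have hCc : ∀ l : Fin (n+1), br (cgen l) C = 0 := by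
      intro l
      rw [hC, aux_br_prod br leibniz, aux_sum_two _ (l+1) (l-1) (hne2 l) ?_]
      · have e1 : (∏ j ∈ univ.erase (l+1), cgen j) * cgen (l+1) = C :=
          Finset.prod_erase_mul univ _ (mem_univ (l+1))
        have e2 : (∏ j ∈ univ.erase (l-1), cgen j) * cgen (l-1) = C :=
          Finset.prod_erase_mul univ _ (mem_univ (l-1))
        have b2 : br (cgen l) (cgen (l-1)) = 2 * (cgen (l-1) * cgen l) := by
          rw [skew]
          have := hcc (l - 1)
          rw [hsub1 l] at this
          rw [this, aux_smul2]
          ring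
        rw [hcc l, b2, aux_smul2]
        linear_combination -(2 * cgen l) * e1 + (2 * cgen l) * e2
      · intro m hm1 hm2
        have : br (cgen l) (cgen m) = 0 := by
          refine hcc0 l m hm1 fun h => hm2 ?_
          rw [h]
          exact ((add_sub_cancel_right m 1)).symm
        rw [this, mul_zero]
    -- R * P = C
    have hRP : R * P = C := by
      rw [show R = ∏ k, (cgen k * dginv k) from rfl, show P = ∏ k, dgen k from rfl, hC,
        ← Finset.prod_mul_distrib]
      refine Finset.prod_congr rfl fun i _ => ?_
      rw [mul_assoc, mul_comm (dginv i), aux_dd_one, mul_one]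
    -- P is invertible
    have hPinv : P * (∏ k, dginv k) = 1 := by
      rw [show P = ∏ k, dgen k from rfl, ← Finset.prod_mul_distrib]
      rw [Finset.prod_congr rfl fun i _ => aux_dd_one i, Finset.prod_const_one]
    have cancelP : ∀ x : TodaTorusC n, P * x = 0 → x = 0 := by
      intro x hx
      calc x = (P * (∏ k, dginv k)) * x := by rw [hPinv, one_mul]
        _ = (∏ k, dginv k) * (P * x) := by ring
        _ = 0 := by rw [hx, mul_zero]
    have hRc : ∀ l, br (cgen l) R = 0 := by
      intro l
      apply cancelP
      have := leibniz (cgen l) R P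
      rw [hRP, hCc l, hPc l, mul_zero, zero_add] at this
      exact this.symm
    have hRd : ∀ l, br (dgen l) R = 0 := by
      intro l
      apply cancelP
      have := leibniz (dgen l) R P
      rw [hRP, hCd l, hPd l, mul_zero, zero_add] at this
      exact this.symm
    refine ⟨?_, ?_, ?_, ?_⟩
    · rw [skew, hPc k, neg_zero]
    · rw [skew, hPd k, neg_zero]
    · rw [skew, hRc k, neg_zero]
    · rw [skew, hRd k, neg_zero]
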